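/- Let (a_k) be a sequence in a commutative ring R with a_{1+r} = Σ_{i=1}^r p_{i,r} a_i for all r ≥ 1. Then a_{r+1} = a_1 · det(Q), where Q is the r×r upper Hessenberg matrix with Q_{i,j} = p_{i,j} for i ≤ j, Q_{i+1,i} = -1, and Q_{i,j} = 0 for i > j+1. -/

import Mathlib

open Matrix Finset

theorem one_determinant_hessenberg {R : Type*} [CommRing R]
    (a : ℕ → R) (p : ℕ → ℕ → R)
    (h : ∀ r : ℕ, 1 ≤ r → a (1 + r) = ∑ i ∈ Finset.Icc 1 r, p i r * a i)
    (r : ℕ) (hr : 1 ≤ r) :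
    a (r + 1) = a 1 * Matrix.det (Matrix.of fun i j : Fin r =>
      if (i : ℕ) ≤ (j : ℕ) then p ((i : ℕ) + 1) ((j : ℕ) + 1)
      else if (i : ℕ) = (j : ℕ) + 1 then -1 else 0) := by
  obtain ⟨m, rfl⟩ : ∃ m, r = m + 1 := ⟨r - 1, (Nat.succ_pred_eq_of_pos hr).symm⟩
  set Q : Matrix (Fin (m+1)) (Fin (m+1)) R := Matrix.of fun i j : Fin (m+1) =>
      if (i : ℕ) ≤ (j : ℕ) then p ((i : ℕ) + 1) ((j : ℕ) + 1)
      else if (i : ℕ) = (j : ℕ) + 1 then -1 else 0 with hQ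
  set v : Fin (m+1) → R := fun k => a ((k : ℕ) + 1) with hv
  -- the recurrence, reindexed over `range`
  have hrec : ∀ n : ℕ, a (n + 2) = ∑ k ∈ Finset.range (n+1), p (k+1) (n+1) * a (k+1) := by
    intro n
    have := h (n+1) (Nat.le_add_left 1 n)
    rw [← Finset.Ico_add_one_right_eq_Icc, Finset.sum_Ico_eq_sum_range,
      show 1 + (n + 1) = n + 2 by omega] at this
    simpa [add_comm, Nat.add_sub_cancel] using this
  -- the key vector identity
  have key : Qᵀ *ᵥ v = Pi.single (Fin.last m) (a (m + 2)) := by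
    funext j
    have hjm : (j : ℕ) ≤ m := Nat.lt_succ_iff.mp j.isLt
    set g : ℕ → R := fun k =>
      (if k ≤ (j : ℕ) then p (k+1) ((j : ℕ)+1)
        else if k = (j : ℕ) + 1 then -1 else 0) * a (k+1) with hg
    have hsum : (Qᵀ *ᵥ v) j = ∑ k ∈ Finset.range (m+1), g k := by
      rw [Matrix.mulVec, show (Qᵀ j) ⬝ᵥ v = ∑ k : Fin (m+1), Q k j * v k from rfl,
        ← Fin.sum_univ_eq_sum_range g]
      exact Finset.sum_congr rfl fun k _ => by simp [hQ, hv, hg]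
    rcases eq_or_lt_of_le hjm with hj | hj
    · have hjl : j = Fin.last m := Fin.ext hj
      rw [hsum, hjl, Pi.single_eq_same, hrec m]
      refine Finset.sum_congr rfl fun k hk => ?_
      simp only [Finset.mem_range] at hk
      rw [hg]
      simp only
      rw [if_pos (by omega), hj]
    · have hjl : j ≠ Fin.last m := by
        intro hc; rw [hc] at hj; exact absurd hj (by simp [Fin.val_last])
      rw [hsum, Pi.single_eq_of_ne hjl]
      have hsub : Finset.range ((j:ℕ)+2) ⊆ Finset.range (m+1) := by
        apply Finset.range_subset_range.mpr; omega
      rw [← Finset.sum_subset hsub (by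
        intro k hk hk2
        simp only [Finset.mem_range] at hk hk2
        rw [hg]; simp only
        rw [if_neg (by omega), if_neg (by omega), zero_mul])]
      rw [Finset.sum_range_succ]
      have hg1 : g ((j:ℕ)+1) = -1 * a ((j:ℕ)+2) := by
        rw [hg]; simp only
        rw [if_neg (by omega), if_pos trivial]
      have hg2 : ∑ k ∈ Finset.range ((j:ℕ)+1), g k = a ((j:ℕ) + 2) := by
        rw [hrec (j:ℕ)]
        refine Finset.sum_congr rfl fun k hk => ?_
        simp only [Finset.mem_range] at hk
        rw [hg]; simp only
        rw [if_pos (by omega)]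
      rw [hg1, hg2]; ring
  -- adjugate entry computation
  have hadj : Matrix.adjugate Qᵀ 0 (Fin.last m) = 1 := by
    rw [Matrix.adjugate_apply]
    set B := (Qᵀ).updateRow (Fin.last m) (Pi.single (0 : Fin (m+1)) 1) with hB
    have hBentry : ∀ (i : Fin m) (k : Fin (m+1)), B i.castSucc k = Q k i.castSucc := by
      intro i k
      rw [hB, Matrix.updateRow_ne (Fin.castSucc_lt_last i).ne, Matrix.transpose_apply]
    rw [Matrix.det_succ_row B (Fin.last m)]
    rw [Finset.sum_eq_single 0]
    · have hB0 : B (Fin.last m) 0 = 1 := by simp [hB]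
      have hminor : (B.submatrix (Fin.last m).succAbove (0 : Fin (m+1)).succAbove).det
          = (-1 : R) ^ m := by
        have hlt : (B.submatrix (Fin.last m).succAbove (0 : Fin (m+1)).succAbove).BlockTriangular
            OrderDual.toDual := by
          intro i j hij
          have hij' : (i : ℕ) < (j : ℕ) := hij
          simp only [Matrix.submatrix_apply, Fin.succAbove_last, Fin.succAbove_zero]
          rw [hBentry]
          simp only [hQ, Matrix.of_apply, Fin.val_succ, Fin.coe_castSucc]
          rw [if_neg (by omega), if_neg (by omega)]
        rw [Matrix.det_of_lowerTriangular _ hlt]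
        have hd : ∀ i : Fin m, (B.submatrix (Fin.last m).succAbove
            (0 : Fin (m+1)).succAbove) i i = -1 := by
          intro i
          simp only [Matrix.submatrix_apply, Fin.succAbove_last, Fin.succAbove_zero]
          rw [hBentry]
          simp only [hQ, Matrix.of_apply, Fin.val_succ, Fin.coe_castSucc]
          rw [if_neg (by omega), if_pos trivial]
        rw [Finset.prod_congr rfl (fun i _ => hd i)]
        simp
      rw [hB0, hminor, Fin.val_last]
      simp [← pow_add]
    · intro b _ hb
      have : B (Fin.last m) b = 0 := by simp [hB, Pi.single_eq_of_ne hb]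
      rw [this]; ring
    · simp
  -- Cramer step
  have hc := congrArg (fun M => M *ᵥ v) (Matrix.adjugate_mul Qᵀ)
  rw [← Matrix.mulVec_mulVec, key, Matrix.mulVec_single, Matrix.smul_mulVec,
    Matrix.one_mulVec] at hc
  have h0 := congrFun hc 0
  simp only [Pi.smul_apply, op_smul_eq_mul, Matrix.col_apply, smul_eq_mul, hadj, one_mul] at h0
  rw [Matrix.det_transpose] at h0
  have hv0 : v 0 = a 1 := by simp [hv]
  rw [hv0] at h0
  rw [show m + 1 + 1 = m + 2 from rfl, h0]
  ring
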